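/- If A < K < B are keys, then D-bit(A,K) ≠ D-bit(K,B). -/

import Mathlib

/-- Lexicographic order on fixed-length bit strings (position 0 most significant). -/
def keyLt {m : ℕ} (x y : Fin m → Bool) : Prop :=
  ∃ i : Fin m, (∀ j : Fin m, j < i → x j = y j) ∧ x i < y i

/-- Distinction bit position: the least position where `x` and `y` differ. -/
noncomputable def dbit {m : ℕ} (x y : Fin m → Bool) : ℕ :=
  sInf {i : ℕ | ∃ h : i < m, x ⟨i, h⟩ ≠ y ⟨i, h⟩}

lemma dbit_eq_wit {m : ℕ} {x y : Fin m → Bool} (i : Fin m)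
    (hj : ∀ j : Fin m, j < i → x j = y j) (hi : x i < y i) :
    dbit x y = i.val := by
  have hmem : (i : ℕ) ∈ {n : ℕ | ∃ h : n < m, x ⟨n, h⟩ ≠ y ⟨n, h⟩} :=
    ⟨i.isLt, by simpa using ne_of_lt hi⟩
  refine le_antisymm (Nat.sInf_le hmem) ?_
  refine le_csInf ⟨_, hmem⟩ ?_
  intro n hn
  obtain ⟨h, hne⟩ := hn
  by_contra hlt
  exact hne (hj ⟨n, h⟩ (by simpa [Fin.lt_def] using Nat.lt_of_not_le hlt))

/-- If A < K < B, the two adjacent distinction bit positions around K differ. -/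
theorem dbit_ne {m : ℕ} (A K B : Fin m → Bool)
    (hAK : keyLt A K) (hKB : keyLt K B) :
    dbit A K ≠ dbit K B := by
  obtain ⟨i, hji, hi⟩ := hAK
  obtain ⟨i', hji', hi'⟩ := hKB
  rw [dbit_eq_wit i hji hi, dbit_eq_wit i' hji' hi']
  intro h
  have : i = i' := Fin.ext h
  subst this
  rw [Bool.lt_iff] at hi hi'
  rw [hi.2] at hi'
  exact Bool.noConfusion hi'.1
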